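/- Suppose f : {0,1}^n → {0,1} has certificate complexity at most k, and let T be a complete decision tree of depth d such that at each internal node v, the queried variable has influence on the restricted function f_v at least (1/2)·MaxInf(f_v). Define φ(t) as the average total influence of the restricted functions at the depth-t nodes of T (uniform over the 2^t root-to-depth-t paths). Then φ(t) ≤ φ(t−1)·(1 − 1/(2k³)) for each 1 ≤ t ≤ d, and hence φ(d) ≤ k·(1 − 1/(2k³))^d. -/

import Mathlib

open Finset

variable {ι : Type*} [Fintype ι] [DecidableEq ι]

/-- `x` with its `i`-th bit flipped. -/
def flipAt (x : ι → Bool) (i : ι) : ι → Bool := Function.update x i (!x i)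

/-- `S` is a certificate for `f`'s value at `x`. -/
def IsCert (f : (ι → Bool) → Bool) (x : ι → Bool) (S : Finset ι) : Prop :=
  ∀ y : ι → Bool, (∀ i ∈ S, y i = x i) → f y = f x

/-- Certificate complexity of `f` at `x`: minimum size of a certificate. -/
noncomputable def certAt (f : (ι → Bool) → Bool) (x : ι → Bool) : ℕ :=
  sInf {k | ∃ S : Finset ι, IsCert f x S ∧ S.card = k}

/-- Certificate complexity of `f`. -/
noncomputable def certC (f : (ι → Bool) → Bool) : ℕ :=
  sSup {k | ∃ x : ι → Bool, certAt f x = k}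

/-- Influence of coordinate `i` on `f` (uniform distribution). -/
noncomputable def influence (f : (ι → Bool) → Bool) (i : ι) : ℝ :=
  ((univ.filter fun x : ι → Bool => f (flipAt x i) ≠ f x).card : ℝ) / 2 ^ Fintype.card ι

/-- Total influence of `f`. -/
noncomputable def totalInf (f : (ι → Bool) → Bool) : ℝ := ∑ i : ι, influence f i

/-- `Pr_{x uniform}[f(x) = b]`. -/
noncomputable def probEq (f : (ι → Bool) → Bool) (b : Bool) : ℝ :=
  ((univ.filter fun x : ι → Bool => f x = b).card : ℝ) / 2 ^ Fintype.card ι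

/-- Variance of `f`: `Pr[f = 0] * Pr[f = 1]`. -/
noncomputable def fvar (f : (ι → Bool) → Bool) : ℝ := probEq f false * probEq f true


/-- `f` with coordinate `i` fixed to `b` (represented on the full cube). -/
def fixCoord {ι : Type*} [DecidableEq ι] (f : (ι → Bool) → Bool) (i : ι) (b : Bool) :
    (ι → Bool) → Bool :=
  fun x => f (Function.update x i b)

/-- The restriction of `f` along the root-to-node path whose (reversed) bit string is `r`,
in the tree whose query at the node with reversed path `r` is `q r`. -/
def pathRes {ι : Type*} [DecidableEq ι] (f : (ι → Bool) → Bool) (q : List Bool → ι) :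
    List Bool → ((ι → Bool) → Bool)
  | [] => f
  | b :: r => fixCoord (pathRes f q r) (q r) b

set_option linter.unusedSectionVars false
set_option maxHeartbeats 1000000

namespace Stmt19Aux

lemma flipAt_flipAt (x : ι → Bool) (i : ι) : flipAt (flipAt x i) i = x := by
  simp [flipAt, Function.update_idem, Function.update_self]

lemma flipAt_bijective (i : ι) : Function.Bijective (fun x : ι → Bool => flipAt x i) :=
  Function.bijective_iff_has_inverse.2 ⟨fun x => flipAt x i,
    fun x => flipAt_flipAt x i, fun x => flipAt_flipAt x i⟩

lemma update_flipAt (x : ι → Bool) (i : ι) (b : Bool) :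
    Function.update (flipAt x i) i b = Function.update x i b := by
  simp [flipAt, Function.update_idem]

lemma flipAt_update (x : ι → Bool) {i j : ι} (h : j ≠ i) (b : Bool) :
    flipAt (Function.update x i b) j = Function.update (flipAt x j) i b := by
  unfold flipAt
  rw [Function.update_comm h, Function.update_of_ne h]

lemma flipAt_update_self (x : ι → Bool) (i : ι) (b : Bool) :
    Function.update (flipAt x i) i b = Function.update x i b := update_flipAt x i b

/-- master summation lemma -/
lemma sum_update (F : (ι → Bool) → ℝ) (i : ι) :
    ∑ b : Bool, ∑ x : ι → Bool, F (Function.update x i b) = 2 * ∑ x : ι → Bool, F x := by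
  rw [Finset.sum_comm]
  have h1 : ∀ x : ι → Bool, ∑ b : Bool, F (Function.update x i b) = F x + F (flipAt x i) := by
    intro x
    rw [Fintype.sum_bool]
    cases hx : x i
    · rw [show Function.update x i true = flipAt x i by simp [flipAt, hx],
        show Function.update x i false = x by rw [← hx]; exact Function.update_eq_self i x]
      ring
    · rw [show Function.update x i false = flipAt x i by simp [flipAt, hx],
        show Function.update x i true = x by rw [← hx]; exact Function.update_eq_self i x]
  rw [Finset.sum_congr rfl (fun x _ => h1 x), Finset.sum_add_distrib]
  rw [Fintype.sum_bijective _ (flipAt_bijective i) _ F (fun x => rfl)]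
  ring

/-- Expectation over the uniform cube. -/
noncomputable def E (g : (ι → Bool) → ℝ) : ℝ := (∑ x : ι → Bool, g x) / 2 ^ Fintype.card ι

lemma card_cube : (Fintype.card (ι → Bool) : ℝ) = 2 ^ Fintype.card ι := by
  rw [Fintype.card_fun]; norm_num

lemma two_pow_pos : (0:ℝ) < 2 ^ Fintype.card ι := by positivity

lemma E_const (c : ℝ) : E (fun _ : ι → Bool => c) = c := by
  unfold E
  rw [Finset.sum_const, nsmul_eq_mul, ← Finset.card_univ, ← Fintype.card, card_cube]
  field_simp
  rw [Finset.card_univ]; ring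

lemma E_add (g h : (ι → Bool) → ℝ) : E (fun x => g x + h x) = E g + E h := by
  unfold E; rw [Finset.sum_add_distrib]; ring

lemma E_sub (g h : (ι → Bool) → ℝ) : E (fun x => g x - h x) = E g - E h := by
  unfold E; rw [Finset.sum_sub_distrib]; ring

lemma E_mono {g h : (ι → Bool) → ℝ} (hgh : ∀ x, g x ≤ h x) : E g ≤ E h := by
  unfold E
  gcongr
  exact hgh _


lemma E_nonneg {g : (ι → Bool) → ℝ} (hg : ∀ x, 0 ≤ g x) : 0 ≤ E g := by
  have := E_const (ι := ι) 0
  calc (0:ℝ) = E (fun _ : ι → Bool => 0) := this.symm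
  _ ≤ E g := E_mono hg

lemma abs_E_le (g : (ι → Bool) → ℝ) : |E g| ≤ E (fun x => |g x|) := by
  unfold E
  rw [abs_div, abs_of_pos two_pow_pos]
  exact div_le_div_of_nonneg_right (Finset.abs_sum_le_sum_abs _ _) two_pow_pos.le

lemma influence_eq_E (f : (ι → Bool) → Bool) (i : ι) :
    influence f i = E (fun x => if f (flipAt x i) = f x then 0 else 1) := by
  unfold influence E
  congr 1
  rw [← Finset.sum_boole]
  apply Finset.sum_congr rfl
  intro x _
  by_cases h : f (flipAt x i) = f x <;> simp [h]

lemma influence_nonneg (f : (ι → Bool) → Bool) (i : ι) : 0 ≤ influence f i := by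
  unfold influence
  positivity

lemma influence_fixCoord_self (f : (ι → Bool) → Bool) (i : ι) (b : Bool) :
    influence (fixCoord f i b) i = 0 := by
  unfold influence
  have : (univ.filter fun x : ι → Bool => fixCoord f i b (flipAt x i) ≠ fixCoord f i b x) = ∅ := by
    apply Finset.filter_false_of_mem
    intro x _
    simp only [fixCoord, update_flipAt, ne_eq, not_not]
  rw [this]
  simp

lemma influence_fixCoord_sum (f : (ι → Bool) → Bool) {i j : ι} (hij : j ≠ i) :
    ∑ b : Bool, influence (fixCoord f i b) j = 2 * influence f j := by
  have key : ∀ b : Bool, influence (fixCoord f i b) j =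
      E (fun x => (fun y => if f (flipAt y j) = f y then (0:ℝ) else 1) (Function.update x i b)) := by
    intro b
    rw [influence_eq_E]
    unfold E
    congr 1
    apply Finset.sum_congr rfl
    intro x _
    have h1 : fixCoord f i b (flipAt x j) = f (flipAt (Function.update x i b) j) := by
      unfold fixCoord
      rw [flipAt_update x hij b]
    simp only []
    rw [h1]
    rfl
  rw [Fintype.sum_congr _ _ key]
  unfold E
  rw [← Finset.sum_div, sum_update, influence_eq_E]
  unfold E
  ring

lemma totalInf_nonneg (f : (ι → Bool) → Bool) : 0 ≤ totalInf f :=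
  Finset.sum_nonneg fun i _ => influence_nonneg f i

lemma totalInf_fixCoord_sum (f : (ι → Bool) → Bool) (i : ι) :
    ∑ b : Bool, totalInf (fixCoord f i b) = 2 * (totalInf f - influence f i) := by
  unfold totalInf
  rw [Finset.sum_comm]
  have h1 : ∀ j ∈ (univ : Finset ι), j ≠ i →
      ∑ b : Bool, influence (fixCoord f i b) j = 2 * influence f j := fun j _ hj =>
    influence_fixCoord_sum f hj
  rw [← Finset.add_sum_erase _ _ (Finset.mem_univ i)]
  have h2 : ∑ j ∈ univ.erase i, ∑ b : Bool, influence (fixCoord f i b) j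
      = ∑ j ∈ univ.erase i, 2 * influence f j := by
    apply Finset.sum_congr rfl
    intro j hj
    exact influence_fixCoord_sum f (Finset.mem_erase.1 hj).1
  rw [h2]
  have h3 : ∑ b : Bool, influence (fixCoord f i b) i = 0 := by
    rw [Fintype.sum_bool, influence_fixCoord_self, influence_fixCoord_self]; ring
  rw [h3, ← Finset.mul_sum, Finset.sum_erase_eq_sub (Finset.mem_univ i)]
  ring

/-- number of sensitive coordinates at `x` -/
def sens (f : (ι → Bool) → Bool) (x : ι → Bool) : ℕ :=
  (univ.filter fun j => f (flipAt x j) ≠ f x).card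

lemma sens_le_of_cert {f : (ι → Bool) → Bool} {x : ι → Bool} {S : Finset ι}
    (hS : IsCert f x S) : sens f x ≤ S.card := by
  apply Finset.card_le_card
  intro j hj
  rw [Finset.mem_filter] at hj
  by_contra hjS
  apply hj.2
  apply hS
  intro m hm
  have : m ≠ j := fun h => hjS (h ▸ hm)
  simp [flipAt, Function.update_of_ne this]

lemma sensR_eq (f : (ι → Bool) → Bool) (x : ι → Bool) :
    ((sens f x : ℝ)) = ∑ j : ι, (if f (flipAt x j) = f x then (0:ℝ) else 1) := by
  unfold sens
  rw [← Finset.sum_boole]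
  apply Finset.sum_congr rfl
  intro j _
  by_cases h : f (flipAt x j) = f x <;> simp [h]

lemma totalInf_eq_E_sens (f : (ι → Bool) → Bool) :
    totalInf f = E (fun x => (sens f x : ℝ)) := by
  unfold totalInf
  have : ∀ i, influence f i = E (fun x => if f (flipAt x i) = f x then (0:ℝ) else 1) :=
    influence_eq_E f
  rw [Fintype.sum_congr _ _ this]
  unfold E
  rw [← Finset.sum_div]
  congr 1
  rw [Finset.sum_comm]
  apply Finset.sum_congr rfl
  intro x _
  exact (sensR_eq f x).symm

lemma totalInf_le_cert {f : (ι → Bool) → Bool} {c : ℕ}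
    (hb : ∀ x, ∃ S, IsCert f x S ∧ S.card ≤ c) : totalInf f ≤ c := by
  rw [totalInf_eq_E_sens]
  calc E (fun x => (sens f x : ℝ)) ≤ E (fun _ : ι → Bool => (c:ℝ)) := by
        apply E_mono
        intro x
        obtain ⟨S, hS, hcard⟩ := hb x
        exact_mod_cast (sens_le_of_cert hS).trans hcard
  _ = c := E_const c

lemma probEq_nonneg (f : (ι → Bool) → Bool) (b : Bool) : 0 ≤ probEq f b := by
  unfold probEq; positivity

lemma probEq_total (f : (ι → Bool) → Bool) : probEq f false + probEq f true = 1 := by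
  unfold probEq
  rw [← add_div]
  rw [div_eq_one_iff_eq (ne_of_gt two_pow_pos)]
  rw [← Nat.cast_add]
  rw [← card_cube (ι := ι), ← Finset.card_univ]
  norm_cast
  rw [← Finset.card_filter_add_card_filter_not (s := (univ : Finset (ι → Bool)))
    (p := fun x => f x = false)]
  congr 1
  apply Finset.card_bij (fun a _ => a)
  · intro a ha
    simp only [Finset.mem_filter] at ha ⊢
    simp [Bool.not_eq_false] at *
    exact ha
  · intro a ha b hb hab
    exact hab
  · intro a ha
    refine ⟨a, ?_, rfl⟩
    simp only [Finset.mem_filter] at ha ⊢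
    simp [Bool.not_eq_false] at *
    exact ha

lemma totalInf_le_twice (f : (ι → Bool) → Bool) (b : Bool) {c : ℕ}
    (hb : ∀ x, ∃ S, IsCert f x S ∧ S.card ≤ c) :
    totalInf f ≤ 2 * probEq f b * c := by
  rw [totalInf_eq_E_sens]
  have key : ∑ x : ι → Bool, ((sens f x : ℝ))
      = 2 * ∑ x : ι → Bool, (if f x = b then (sens f x : ℝ) else 0) := by
    have split : ∀ x : ι → Bool, ((sens f x : ℝ)) =
        (if f x = b then (sens f x : ℝ) else 0) + (if f x = !b then (sens f x : ℝ) else 0) := by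
      intro x
      cases hfx : f x <;> cases b <;> simp [hfx]
    rw [Fintype.sum_congr _ _ split, Finset.sum_add_distrib]
    have flipid : ∑ x : ι → Bool, (if f x = !b then (sens f x : ℝ) else 0)
        = ∑ x : ι → Bool, (if f x = b then (sens f x : ℝ) else 0) := by
      have e1 : ∀ x : ι → Bool, (if f x = !b then (sens f x:ℝ) else 0)
          = ∑ j : ι, (if f x = !b ∧ ¬ (f (flipAt x j) = f x) then (1:ℝ) else 0) := by
        intro x
        by_cases hfx : f x = !b
        · rw [if_pos hfx, sensR_eq]
          apply Finset.sum_congr rfl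
          intro j _
          have hiff : (f x = !b ∧ ¬ f (flipAt x j) = f x) ↔ ¬ (f (flipAt x j) = f x) := by
            simp [hfx]
          rw [if_congr hiff rfl rfl]
          by_cases h : f (flipAt x j) = f x <;> simp [h]
        · simp [hfx]
      have e2 : ∀ x : ι → Bool, (if f x = b then (sens f x:ℝ) else 0)
          = ∑ j : ι, (if f x = b ∧ ¬ (f (flipAt x j) = f x) then (1:ℝ) else 0) := by
        intro x
        by_cases hfx : f x = b
        · rw [if_pos hfx, sensR_eq]
          apply Finset.sum_congr rfl
          intro j _
          have hiff : (f x = b ∧ ¬ f (flipAt x j) = f x) ↔ ¬ (f (flipAt x j) = f x) := by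
            simp [hfx]
          rw [if_congr hiff rfl rfl]
          by_cases h : f (flipAt x j) = f x <;> simp [h]
        · simp [hfx]
      rw [Fintype.sum_congr _ _ e1, Fintype.sum_congr _ _ e2]
      calc ∑ x : ι → Bool, ∑ j : ι, (if f x = !b ∧ ¬ (f (flipAt x j) = f x) then (1:ℝ) else 0)
          = ∑ j : ι, ∑ x : ι → Bool, (if f x = !b ∧ ¬ (f (flipAt x j) = f x) then (1:ℝ) else 0) :=
            Finset.sum_comm
      _ = ∑ j : ι, ∑ x : ι → Bool, (if f x = b ∧ ¬ (f (flipAt x j) = f x) then (1:ℝ) else 0) := by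
          apply Finset.sum_congr rfl
          intro j _
          rw [Fintype.sum_bijective _ (flipAt_bijective j)
            (fun x : ι → Bool => if f x = !b ∧ ¬ (f (flipAt x j) = f x) then (1:ℝ) else 0)
            (fun x : ι → Bool => if f x = b ∧ ¬ (f (flipAt x j) = f x) then (1:ℝ) else 0)]
          intro x
          simp only [flipAt_flipAt]
          have hiff2 : (f x = !b ∧ ¬ (f (flipAt x j) = f x))
              ↔ (f (flipAt x j) = b ∧ ¬ (f x = f (flipAt x j))) := by
            cases hx : f x <;> cases hy : f (flipAt x j) <;> cases b <;> simp [hx, hy]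
          rw [if_congr hiff2 rfl rfl]
      _ = ∑ x : ι → Bool, ∑ j : ι, (if f x = b ∧ ¬ (f (flipAt x j) = f x) then (1:ℝ) else 0) :=
            Finset.sum_comm
    rw [flipid]
    ring
  unfold E
  rw [key]
  have bound : ∑ x : ι → Bool, (if f x = b then (sens f x : ℝ) else 0)
      ≤ ∑ x : ι → Bool, (if f x = b then (c:ℝ) else 0) := by
    apply Finset.sum_le_sum
    intro x _
    by_cases hfx : f x = b
    · simp only [hfx, if_true]
      obtain ⟨S, hS, hcard⟩ := hb x
      exact_mod_cast (sens_le_of_cert hS).trans hcard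
    · simp [hfx]
  have e3 : ∑ x : ι → Bool, (if f x = b then (c:ℝ) else 0)
      = probEq f b * c * 2 ^ Fintype.card ι := by
    rw [← Finset.sum_filter, Finset.sum_const, nsmul_eq_mul]
    unfold probEq
    field_simp
    try ring
  have e5 : (2 * ∑ x : ι → Bool, (if f x = b then (sens f x : ℝ) else 0)) / 2 ^ Fintype.card ι
      ≤ (2 * ∑ x : ι → Bool, (if f x = b then (c:ℝ) else 0)) / 2 ^ Fintype.card ι := by
    apply div_le_div_of_nonneg_right _ two_pow_pos.le
    linarith [bound]
  refine e5.trans ?_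
  rw [e3]
  apply le_of_eq
  field_simp

lemma lemmaA {f : (ι → Bool) → Bool} {c : ℕ}
    (hb : ∀ x, ∃ S, IsCert f x S ∧ S.card ≤ c) :
    totalInf f ≤ 4 * fvar f * c := by
  have h0 := totalInf_le_twice f false hb
  have h1 := totalInf_le_twice f true hb
  have ht := probEq_total f
  have hn0 := probEq_nonneg f false
  have hn1 := probEq_nonneg f true
  have hc : (0:ℝ) ≤ c := Nat.cast_nonneg c
  unfold fvar
  rcases le_total (probEq f false) (probEq f true) with h | h
  · nlinarith [mul_nonneg (mul_nonneg hn0 hc) (by linarith : (0:ℝ) ≤ 2 * probEq f true - 1)]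
  · nlinarith [mul_nonneg (mul_nonneg hn1 hc) (by linarith : (0:ℝ) ≤ 2 * probEq f false - 1)]

/-- ±1 version of a Boolean function -/
noncomputable def toR (f : (ι → Bool) → Bool) : (ι → Bool) → ℝ := fun x => if f x then 1 else -1

lemma toR_abs (f : (ι → Bool) → Bool) (x : ι → Bool) : |toR f x| ≤ 1 := by
  unfold toR; by_cases h : f x <;> simp [h]

lemma toR_fixCoord (f : (ι → Bool) → Bool) (i : ι) (b : Bool) (x : ι → Bool) :
    toR (fixCoord f i b) x = toR f (Function.update x i b) := rfl

/-- `f` is computable by a decision tree of depth `d`. -/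
def HasD (f : (ι → Bool) → Bool) : ℕ → Prop
  | 0 => ∀ x y, f x = f y
  | (d+1) => (∀ x y, f x = f y) ∨
      ∃ i, HasD (fixCoord f i false) d ∧ HasD (fixCoord f i true) d

lemma hasD_const {f : (ι → Bool) → Bool} (h : ∀ x y, f x = f y) (d : ℕ) : HasD f d := by
  cases d with
  | zero => exact h
  | succ d => exact Or.inl h

lemma hasD_mono : ∀ (e : ℕ) (f : (ι → Bool) → Bool) (d : ℕ), HasD f d → d ≤ e → HasD f e := by
  intro e
  induction e with
  | zero =>
    intro f d h hd
    rw [Nat.le_zero.mp hd] at h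
    exact h
  | succ e ih =>
    intro f d h hd
    cases d with
    | zero => exact hasD_const h _
    | succ d =>
      rcases h with hc | ⟨i, h0, h1⟩
      · exact Or.inl hc
      · exact Or.inr ⟨i, ih _ _ h0 (by omega), ih _ _ h1 (by omega)⟩

/-- Covariance. -/
noncomputable def cov (F g : (ι → Bool) → ℝ) : ℝ := E (fun x => F x * g x) - E F * E g

lemma E_congr {g h : (ι → Bool) → ℝ} (H : ∀ x, g x = h x) : E g = E h :=
  congrArg E (funext H)

lemma cov_toR_const {f : (ι → Bool) → Bool} (hc : ∀ x y, f x = f y)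
    (g : (ι → Bool) → ℝ) : cov (toR f) g = 0 := by
  unfold cov
  have h1 : E (fun x => toR f x * g x) = E (fun x => toR f (fun _ => false) * g x) :=
    E_congr fun x => by rw [show toR f x = toR f (fun _ => false) by unfold toR; rw [hc x _]]
  have h2 : E (toR f) = E (fun _ : ι → Bool => toR f (fun _ => false)) :=
    E_congr fun x => by rw [show toR f x = toR f (fun _ => false) by unfold toR; rw [hc x _]]
  rw [h1, h2, E_const]
  rw [show E (fun x => toR f (fun _ => false) * g x) = toR f (fun _ => false) * E g by
    unfold E; rw [← Finset.mul_sum]; ring]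
  ring

lemma osss : ∀ (d : ℕ) (f : (ι → Bool) → Bool), HasD f d →
    ∀ (g : (ι → Bool) → ℝ) (M : ℝ), 0 ≤ M →
    (∀ j, E (fun x => |g (flipAt x j) - g x|) ≤ M) →
    |cov (toR f) g| ≤ d * M / 2 := by
  intro d
  induction d with
  | zero =>
    intro f hf g M hM0 hM
    rw [cov_toR_const hf g]
    simp
  | succ d ih =>
    intro f hf g M hM0 hM
    rcases hf with hc | ⟨i, hD0, hD1⟩
    · rw [cov_toR_const hc g]
      simp only [abs_zero]
      positivity
    · set h : (ι → Bool) → ℝ :=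
        fun x => (g (Function.update x i false) + g (Function.update x i true)) / 2 with hh
      set r : (ι → Bool) → ℝ := fun x => g x - h x with hr
      have ha : ∀ x, r x = (g x - g (flipAt x i)) / 2 := by
        intro x
        rw [hr, hh]
        simp only []
        cases hx : x i
        · rw [show Function.update x i false = x by rw [← hx]; exact Function.update_eq_self i x,
            show Function.update x i true = flipAt x i by simp [flipAt, hx]]
          ring
        · rw [show Function.update x i true = x by rw [← hx]; exact Function.update_eq_self i x,
            show Function.update x i false = flipAt x i by simp [flipAt, hx]]
          ring
      have hb : E h = E g := by
        unfold E
        congr 1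
        have h2 := sum_update g i
        rw [Fintype.sum_bool] at h2
        have expand : ∑ x : ι → Bool, h x
            = (∑ x : ι → Bool, g (Function.update x i false)
              + ∑ x : ι → Bool, g (Function.update x i true)) / 2 := by
          rw [hh, ← Finset.sum_add_distrib, Finset.sum_div]
        rw [expand]
        linarith [h2]
      have hinv : ∀ x (b : Bool), h (Function.update x i b) = h x := by
        intro x b
        rw [hh]
        simp only [Function.update_idem]
      have hinvflip : ∀ x, h (flipAt x i) = h x := fun x => hinv x _
      -- (d) |E[F r]| ≤ M/2
      have hdd : |E (fun x => toR f x * r x)| ≤ M / 2 := by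
        calc |E (fun x => toR f x * r x)| ≤ E (fun x => |toR f x * r x|) := abs_E_le _
        _ ≤ E (fun x => |g (flipAt x i) - g x| / 2) := by
            apply E_mono
            intro x
            rw [abs_mul, ha x]
            calc |toR f x| * |(g x - g (flipAt x i)) / 2|
                ≤ 1 * |(g x - g (flipAt x i)) / 2| :=
                  mul_le_mul_of_nonneg_right (toR_abs f x) (abs_nonneg _)
            _ = |g (flipAt x i) - g x| / 2 := by
                  rw [one_mul, abs_div, abs_sub_comm]
                  simp
        _ ≤ M / 2 := by
            rw [show E (fun x => |g (flipAt x i) - g x| / 2)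
                = E (fun x => |g (flipAt x i) - g x|) / 2 by
              unfold E; rw [← Finset.sum_div]; ring]
            linarith [hM i]
      -- (e) decomposition of cov over branches
      have he : cov (toR f) h = (cov (toR (fixCoord f i false)) h
          + cov (toR (fixCoord f i true)) h) / 2 := by
        have key1 : ∀ (u : (ι → Bool) → ℝ), (∀ x b, u (Function.update x i b) = u x) →
            ∑ x : ι → Bool, toR f x * u x
            = (∑ x : ι → Bool, toR (fixCoord f i false) x * u x
              + ∑ x : ι → Bool, toR (fixCoord f i true) x * u x) / 2 := by
          intro u hu
          have h3 := sum_update (fun y => toR f y * u y) i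
          rw [Fintype.sum_bool] at h3
          have h3' : ∑ x : ι → Bool, toR f (Function.update x i true) * u (Function.update x i true)
              + ∑ x : ι → Bool, toR f (Function.update x i false) * u (Function.update x i false)
              = 2 * ∑ x : ι → Bool, toR f x * u x := h3
          have e0 : ∀ (b : Bool),
              ∑ x : ι → Bool, toR f (Function.update x i b) * u (Function.update x i b)
              = ∑ x : ι → Bool, toR (fixCoord f i b) x * u x := by
            intro b
            apply Finset.sum_congr rfl
            intro x _
            rw [toR_fixCoord, hu x b]
          rw [e0 false, e0 true] at h3'
          linarith [h3']
        unfold cov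
        have k1 := key1 h hinv
        have k2 := key1 (fun _ => 1) (fun _ _ => rfl)
        simp only [mul_one] at k2
        have eh : E (fun x => toR f x * h x)
            = (E (fun x => toR (fixCoord f i false) x * h x)
              + E (fun x => toR (fixCoord f i true) x * h x)) / 2 := by
          unfold E; rw [k1]; ring
        have ef : E (toR f) = (E (toR (fixCoord f i false)) + E (toR (fixCoord f i true))) / 2 := by
          unfold E; rw [k2]; ring
        rw [eh, ef]
        ring
      -- (f) h has small flip-expectations
      have hf2 : ∀ j, E (fun x => |h (flipAt x j) - h x|) ≤ M := by
        intro j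
        by_cases hij : j = i
        · subst hij
          calc E (fun x => |h (flipAt x j) - h x|) = E (fun _ : ι → Bool => (0:ℝ)) :=
                E_congr fun x => by rw [hinvflip x]; simp
          _ = 0 := E_const 0
          _ ≤ M := hM0
        · have ptwise : ∀ x : ι → Bool, |h (flipAt x j) - h x|
              ≤ (|g (flipAt (Function.update x i false) j) - g (Function.update x i false)|
                + |g (flipAt (Function.update x i true) j) - g (Function.update x i true)|) / 2 := by
            intro x
            have step : h (flipAt x j) - h x
                = ((g (flipAt (Function.update x i false) j) - g (Function.update x i false))
                  + (g (flipAt (Function.update x i true) j) - g (Function.update x i true))) / 2 := by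
              rw [hh]
              simp only []
              rw [← flipAt_update x hij false, ← flipAt_update x hij true]
              ring
            rw [step, abs_div, abs_two]
            apply div_le_div_of_nonneg_right (abs_add_le _ _) (by norm_num)
          have sum2 : E (fun x : ι → Bool =>
                (|g (flipAt (Function.update x i false) j) - g (Function.update x i false)|
                + |g (flipAt (Function.update x i true) j) - g (Function.update x i true)|) / 2)
              = E (fun x => |g (flipAt x j) - g x|) := by
            unfold E
            congr 1
            have h4 := sum_update (fun y => |g (flipAt y j) - g y|) i
            rw [Fintype.sum_bool] at h4
            have h4' : ∑ x : ι → Bool, |g (flipAt (Function.update x i true) j) - g (Function.update x i true)|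
                + ∑ x : ι → Bool, |g (flipAt (Function.update x i false) j) - g (Function.update x i false)|
                = 2 * ∑ x : ι → Bool, |g (flipAt x j) - g x| := h4
            rw [show (∑ x : ι → Bool,
                (|g (flipAt (Function.update x i false) j) - g (Function.update x i false)|
                + |g (flipAt (Function.update x i true) j) - g (Function.update x i true)|) / 2)
                = (∑ x : ι → Bool, |g (flipAt (Function.update x i false) j) - g (Function.update x i false)|
                  + ∑ x : ι → Bool, |g (flipAt (Function.update x i true) j) - g (Function.update x i true)|) / 2 by
              rw [← Finset.sum_add_distrib, Finset.sum_div]]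
            linarith [h4']
          calc E (fun x => |h (flipAt x j) - h x|)
              ≤ E (fun x : ι → Bool =>
                (|g (flipAt (Function.update x i false) j) - g (Function.update x i false)|
                + |g (flipAt (Function.update x i true) j) - g (Function.update x i true)|) / 2) :=
                E_mono ptwise
          _ = E (fun x => |g (flipAt x j) - g x|) := sum2
          _ ≤ M := hM j
      -- assemble
      have hEr : E r = 0 := by
        have : E r = E g - E h := by
          rw [hr, E_sub]
        rw [this, hb]
        ring
      have hsplit : cov (toR f) g = E (fun x => toR f x * r x) + cov (toR f) h := by
        unfold cov
        have e1 : E (fun x => toR f x * g x)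
            = E (fun x => toR f x * r x) + E (fun x => toR f x * h x) := by
          rw [← E_add]
          apply E_congr
          intro x
          rw [hr]
          simp only []
          ring
        have e2 : E g = E h := hb.symm
        rw [e1, e2]
        ring
      have ih0 := ih _ hD0 h M hM0 hf2
      have ih1 := ih _ hD1 h M hM0 hf2
      have habs : |cov (toR f) h| ≤ d * M / 2 := by
        rw [he]
        rw [abs_div, abs_two]
        have : |cov (toR (fixCoord f i false)) h + cov (toR (fixCoord f i true)) h|
            ≤ d * M / 2 + d * M / 2 :=
          (abs_add_le _ _).trans (by linarith)
        linarith
      rw [hsplit]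
      calc |E (fun x => toR f x * r x) + cov (toR f) h|
          ≤ |E (fun x => toR f x * r x)| + |cov (toR f) h| := abs_add_le _ _
      _ ≤ M / 2 + d * M / 2 := by linarith
      _ = (↑(d + 1)) * M / 2 := by push_cast; ring

lemma E_toR (f : (ι → Bool) → Bool) : E (toR f) = probEq f true - probEq f false := by
  unfold E probEq
  rw [div_sub_div_same]
  congr 1
  have split : ∀ x : ι → Bool, toR f x
      = (if f x = true then (1:ℝ) else 0) - (if f x = false then (1:ℝ) else 0) := by
    intro x
    cases h : f x <;> simp [toR, h]
  rw [Fintype.sum_congr _ _ split, Finset.sum_sub_distrib, Finset.sum_boole, Finset.sum_boole]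

lemma cov_toR_self (f : (ι → Bool) → Bool) : cov (toR f) (toR f) = 4 * fvar f := by
  unfold cov
  have h1 : E (fun x => toR f x * toR f x) = 1 := by
    rw [show (fun x : ι → Bool => toR f x * toR f x) = (fun _ : ι → Bool => (1:ℝ)) by
      funext x; cases h : f x <;> simp [toR, h]]
    exact E_const 1
  rw [h1, E_toR]
  have h2 := probEq_total f
  unfold fvar
  nlinarith [h2]

lemma E_flip_toR (f : (ι → Bool) → Bool) (j : ι) :
    E (fun x => |toR f (flipAt x j) - toR f x|) = 2 * influence f j := by
  rw [influence_eq_E]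
  have : ∀ x : ι → Bool, |toR f (flipAt x j) - toR f x|
      = 2 * (if f (flipAt x j) = f x then (0:ℝ) else 1) := by
    intro x
    cases h1 : f (flipAt x j) <;> cases h2 : f x <;> simp [toR, h1, h2] <;> norm_num
  rw [E_congr this]
  unfold E
  rw [← Finset.mul_sum]
  ring

/-- The OSSS corollary: 4·Var ≤ d·MaxInf. -/
lemma osss_var {f : (ι → Bool) → Bool} {d : ℕ} (hf : HasD f d) {W : ℝ} (hW0 : 0 ≤ W)
    (hW : ∀ j, influence f j ≤ W) : 4 * fvar f ≤ d * W := by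
  have h := osss d f hf (toR f) (2 * W) (by linarith)
    (fun j => by rw [E_flip_toR]; linarith [hW j])
  rw [cov_toR_self] at h
  have := le_abs_self (4 * fvar f)
  calc 4 * fvar f ≤ |4 * fvar f| := this
  _ ≤ d * (2 * W) / 2 := h
  _ = d * W := by ring

/-- Override `x` on `S` by `σ`. -/
def ovr (S : Finset ι) (σ x : ι → Bool) : ι → Bool := fun j => if j ∈ S then σ j else x j

lemma hasD_restr (d : ℕ) : ∀ (S : Finset ι) (f : (ι → Bool) → Bool),
    (∀ σ : ι → Bool, HasD (fun x => f (ovr S σ x)) d) → HasD f (S.card + d) := by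
  intro S
  induction S using Finset.induction_on with
  | empty =>
    intro f h
    have := h (fun _ => false)
    rw [show (fun x => f (ovr ∅ (fun _ => false) x)) = f by
      funext x; congr 1 <;> (try (funext j; simp [ovr]))] at this
    simpa using this
  | @insert i S' hiS' ih =>
    intro f h
    rw [Finset.card_insert_of_notMem hiS']
    have branch : ∀ b : Bool, HasD (fixCoord f i b) (S'.card + d) := by
      intro b
      apply ih
      intro σ
      have hfun : (fun x => fixCoord f i b (ovr S' σ x))
          = (fun x => f (ovr (insert i S') (Function.update σ i b) x)) := by
        funext x
        unfold fixCoord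
        congr 1
        funext j
        by_cases hj : j = i
        · subst hj
          simp [ovr, hiS', Function.update_self]
        · simp [ovr, Function.update_of_ne hj, hj]
      rw [hfun]
      exact h (Function.update σ i b)
    have goal2 : HasD f (S'.card + d + 1) := Or.inr ⟨i, branch false, branch true⟩
    rw [show S'.card + 1 + d = S'.card + d + 1 by omega]
    exact goal2

lemma cert_restrict {f : (ι → Bool) → Bool} {S : Finset ι} {σ : ι → Bool}
    {y : ι → Bool} {T : Finset ι} (hT : IsCert f (ovr S σ y) T) :
    IsCert (fun x => f (ovr S σ x)) y (T \ S) := by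
  intro w hw
  apply hT
  intro j hj
  by_cases hjS : j ∈ S
  · simp [ovr, hjS]
  · have hjT : j ∈ T \ S := Finset.mem_sdiff.mpr ⟨hj, hjS⟩
    simp only [ovr, if_neg hjS]
    exact hw j hjT

lemma depth_from_certs (c1 : ℕ) : ∀ (c0 : ℕ) (f : (ι → Bool) → Bool),
    (∀ x, f x = false → ∃ S, IsCert f x S ∧ S.card ≤ c0) →
    (∀ x, f x = true → ∃ S, IsCert f x S ∧ S.card ≤ c1) →
    HasD f (c0 * c1) := by
  intro c0
  induction c0 with
  | zero =>
    intro f h0 _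
    by_cases hex : ∃ x, f x = false
    · obtain ⟨x, hx⟩ := hex
      obtain ⟨S, hS, hcard⟩ := h0 x hx
      have hS0 : S = ∅ := Finset.card_eq_zero.mp (Nat.le_zero.mp hcard)
      subst hS0
      apply hasD_const
      intro a b
      rw [hS a (by intro j hj; exact absurd hj (Finset.notMem_empty j)),
        hS b (by intro j hj; exact absurd hj (Finset.notMem_empty j))]
    · push_neg at hex
      apply hasD_const
      intro a b
      have ha : f a = true := Bool.not_eq_false (f a) ▸ (hex a)
      have hb : f b = true := Bool.not_eq_false (f b) ▸ (hex b)
      rw [ha, hb]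
  | succ m ih =>
    intro f h0 h1
    by_cases hex : ∃ x, f x = true
    · obtain ⟨x1, hx1⟩ := hex
      obtain ⟨S, hS, hScard⟩ := h1 x1 hx1
      have branches : ∀ σ : ι → Bool, HasD (fun x => f (ovr S σ x)) (m * c1) := by
        intro σ
        apply ih
        · -- false inputs of the restriction have certificates of size ≤ m
          intro y hy
          obtain ⟨T, hT, hTcard⟩ := h0 (ovr S σ y) hy
          refine ⟨T \ S, cert_restrict hT, ?_⟩
          -- T ∩ S is nonempty
          have hint : (T ∩ S).Nonempty := by
            by_contra hne
            rw [Finset.not_nonempty_iff_eq_empty] at hne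
            set z : ι → Bool := fun j => if j ∈ T then ovr S σ y j else x1 j with hz
            have hz1 : f z = f (ovr S σ y) := by
              apply hT
              intro j hj
              simp [hz, hj]
            have hz2 : f z = f x1 := by
              apply hS
              intro j hj
              have hjT : j ∉ T := by
                intro hjT
                have : j ∈ T ∩ S := Finset.mem_inter.mpr ⟨hjT, hj⟩
                rw [hne] at this
                exact absurd this (Finset.notMem_empty j)
              simp [hz, hjT]
            rw [hy] at hz1
            rw [hx1] at hz2
            rw [hz1] at hz2
            exact absurd hz2 (by simp)
          have := Finset.card_sdiff_add_card_inter T S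
          have h1le : 1 ≤ (T ∩ S).card := Finset.card_pos.mpr hint
          omega
        · -- true inputs keep certificates of size ≤ c1
          intro y hy
          obtain ⟨T, hT, hTcard⟩ := h1 (ovr S σ y) hy
          exact ⟨T \ S, cert_restrict hT,
            le_trans (Finset.card_le_card Finset.sdiff_subset) hTcard⟩
      have := hasD_restr (m * c1) S f branches
      apply hasD_mono _ _ _ this
      have : (m + 1) * c1 = c1 + m * c1 := by ring
      omega
    · push_neg at hex
      apply hasD_const
      intro a b
      have ha : f a = false := Bool.not_eq_true (f a) ▸ (hex a)
      have hb : f b = false := Bool.not_eq_true (f b) ▸ (hex b)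
      rw [ha, hb]

lemma isCert_univ (f : (ι → Bool) → Bool) (x : ι → Bool) : IsCert f x univ := by
  intro y hy
  congr 1
  funext j
  exact hy j (Finset.mem_univ j)

lemma exists_cert_card_le {f : (ι → Bool) → Bool} {k : ℕ} (hk : certC f ≤ k) (x : ι → Bool) :
    ∃ S, IsCert f x S ∧ S.card ≤ k := by
  have hne : {m | ∃ S : Finset ι, IsCert f x S ∧ S.card = m}.Nonempty :=
    ⟨(univ : Finset ι).card, univ, isCert_univ f x, rfl⟩
  obtain ⟨S, hS, hcard⟩ := Nat.sInf_mem hne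
  refine ⟨S, hS, ?_⟩
  rw [hcard]
  calc certAt f x ≤ certC f := by
        apply le_csSup
        · refine ⟨(univ : Finset ι).card, ?_⟩
          rintro m ⟨y, rfl⟩
          exact Nat.sInf_le ⟨univ, isCert_univ f y, rfl⟩
        · exact ⟨x, rfl⟩
  _ ≤ k := hk

lemma certBdd_fixCoord {f : (ι → Bool) → Bool} {k : ℕ}
    (hb : ∀ x, ∃ S, IsCert f x S ∧ S.card ≤ k) (i : ι) (b : Bool) :
    ∀ x, ∃ S, IsCert (fixCoord f i b) x S ∧ S.card ≤ k := by
  intro x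
  obtain ⟨S, hS, hcard⟩ := hb (Function.update x i b)
  refine ⟨S.erase i, ?_, le_trans (Finset.card_le_card (Finset.erase_subset i S)) hcard⟩
  intro y hy
  unfold fixCoord
  apply hS
  intro j hj
  by_cases hji : j = i
  · subst hji
    simp [Function.update_self]
  · rw [Function.update_of_ne hji, Function.update_of_ne hji]
    exact hy j (Finset.mem_erase.mpr ⟨hji, hj⟩)

lemma certBdd_pathRes {f : (ι → Bool) → Bool} {k : ℕ}
    (hb : ∀ x, ∃ S, IsCert f x S ∧ S.card ≤ k) (q : List Bool → ι) :
    ∀ r : List Bool, ∀ x, ∃ S, IsCert (pathRes f q r) x S ∧ S.card ≤ k := by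
  intro r
  induction r with
  | nil => exact hb
  | cons b r ih => exact certBdd_fixCoord ih (q r) b

lemma fvar_nonneg (f : (ι → Bool) → Bool) : 0 ≤ fvar f :=
  mul_nonneg (probEq_nonneg f false) (probEq_nonneg f true)

/-- The main per-node inequality. -/
lemma key {g : (ι → Bool) → Bool} {k : ℕ}
    (hb : ∀ x, ∃ S, IsCert g x S ∧ S.card ≤ k) (i : ι)
    (hmax : ∀ j, influence g j ≤ 2 * influence g i) :
    totalInf g ≤ 2 * (k : ℝ) ^ 3 * influence g i := by
  have hA : totalInf g ≤ 4 * fvar g * k := lemmaA hb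
  have hD : HasD g (k * k) := depth_from_certs k k g (fun x _ => hb x) (fun x _ => hb x)
  have hV : 4 * fvar g ≤ (k * k : ℕ) * (2 * influence g i) :=
    osss_var hD (by linarith [influence_nonneg g i]) hmax
  have hk0 : (0:ℝ) ≤ k := Nat.cast_nonneg k
  push_cast at hV
  nlinarith [fvar_nonneg g, influence_nonneg g i, mul_le_mul_of_nonneg_right hV hk0,
    mul_le_mul_of_nonneg_right hA hk0]

lemma key2 {g : (ι → Bool) → Bool} {k : ℕ} (hk1 : 1 ≤ k)
    (hb : ∀ x, ∃ S, IsCert g x S ∧ S.card ≤ k) (i : ι)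
    (hmax : ∀ j, influence g j ≤ 2 * influence g i) :
    2 * (totalInf g - influence g i) ≤ 2 * totalInf g * (1 - 1 / (2 * (k:ℝ) ^ 3)) := by
  have hkey := key hb i hmax
  have hk3 : (0:ℝ) < 2 * (k:ℝ) ^ 3 := by
    have h1 : (1:ℝ) ≤ (k:ℝ) := by exact_mod_cast hk1
    nlinarith [pow_pos (lt_of_lt_of_le zero_lt_one h1) 3]
  have hfrac : totalInf g / (2 * (k:ℝ) ^ 3) ≤ influence g i := by
    rw [div_le_iff₀ hk3]
    linarith [hkey]
  have expand : 2 * totalInf g * (1 - 1 / (2 * (k:ℝ) ^ 3))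
      = 2 * totalInf g - 2 * (totalInf g / (2 * (k:ℝ) ^ 3)) := by
    field_simp
  rw [expand]
  linarith

lemma influence_const {f : (ι → Bool) → Bool} (hc : ∀ x y, f x = f y) (i : ι) :
    influence f i = 0 := by
  unfold influence
  rw [show (univ.filter fun x : ι → Bool => f (flipAt x i) ≠ f x) = ∅ by
    apply Finset.filter_false_of_mem
    intro x _
    simp only [ne_eq, not_not]
    exact hc _ _]
  simp

lemma totalInf_const {f : (ι → Bool) → Bool} (hc : ∀ x y, f x = f y) : totalInf f = 0 := by
  unfold totalInf
  rw [Finset.sum_congr rfl (fun i _ => influence_const hc i)]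
  simp

lemma pathRes_const {f : (ι → Bool) → Bool} (hc : ∀ x y, f x = f y) (q : List Bool → ι) :
    ∀ r : List Bool, ∀ x y, pathRes f q r x = pathRes f q r y := by
  intro r
  induction r with
  | nil => exact hc
  | cons b r ih =>
    intro x y
    exact ih _ _

lemma ofFn_cons_eq {s : ℕ} (b : Bool) (w : Fin s → Bool) :
    List.ofFn (Fin.cons b w : Fin (s+1) → Bool) = b :: List.ofFn w := by
  rw [List.ofFn_succ]
  simp [Fin.cons_zero, Fin.cons_succ]

end Stmt19Aux

theorem stmt19 {ι : Type*} [Fintype ι] [DecidableEq ι] (f : (ι → Bool) → Bool) (k d : ℕ)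
    (hk : certC f ≤ k) (q : List Bool → ι)
    (hq : ∀ r : List Bool, r.length < d →
      ∀ j : ι, influence (pathRes f q r) j ≤ 2 * influence (pathRes f q r) (q r)) :
    let Φ : ℕ → ℝ := fun t =>
      (∑ v : Fin t → Bool, totalInf (pathRes f q (List.ofFn v))) / 2 ^ t
    (∀ t : ℕ, 1 ≤ t → t ≤ d → Φ t ≤ Φ (t - 1) * (1 - 1 / (2 * k ^ 3))) ∧
      Φ d ≤ k * (1 - 1 / (2 * k ^ 3)) ^ d := by
  intro Φ
  have hb := Stmt19Aux.exists_cert_card_le hk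
  have hΦ : ∀ t : ℕ, Φ t
      = (∑ v : Fin t → Bool, totalInf (pathRes f q (List.ofFn v))) / 2 ^ t := fun t => rfl
  by_cases hk1 : 1 ≤ k
  · -- main case
    have hbr := Stmt19Aux.certBdd_pathRes hb q
    have hkR : (1:ℝ) ≤ (k:ℝ) := by exact_mod_cast hk1
    have hk3 : (0:ℝ) < 2 * (k:ℝ) ^ 3 := by nlinarith [pow_pos (lt_of_lt_of_le zero_lt_one hkR) 3]
    have heps : 0 ≤ 1 - 1 / (2 * (k:ℝ) ^ 3) := by
      have h2 : (2:ℝ) ≤ 2 * (k:ℝ) ^ 3 := by nlinarith [pow_le_pow_left₀ (by norm_num : (0:ℝ) ≤ 1) hkR 3]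
      have := one_div_le_one_div_of_le (by norm_num : (0:ℝ) < 2) h2
      linarith
    have step : ∀ t : ℕ, 1 ≤ t → t ≤ d → Φ t ≤ Φ (t - 1) * (1 - 1 / (2 * (k:ℝ) ^ 3)) := by
      intro t ht1 htd
      obtain ⟨s, rfl⟩ : ∃ s, t = s + 1 := ⟨t - 1, by omega⟩
      have hsum1 : ∑ v : Fin (s+1) → Bool, totalInf (pathRes f q (List.ofFn v))
          = ∑ p : Bool × (Fin s → Bool),
              totalInf (pathRes f q (p.1 :: List.ofFn p.2)) := by
        apply Fintype.sum_equiv (Fin.consEquiv (fun _ : Fin (s+1) => Bool)).symm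
        intro v
        congr 1
        rw [show (Fin.consEquiv (fun _ : Fin (s+1) => Bool)).symm v = (v 0, fun i => v i.succ) from rfl]
        rw [List.ofFn_succ]
      have hsum2 : ∑ p : Bool × (Fin s → Bool), totalInf (pathRes f q (p.1 :: List.ofFn p.2))
          = ∑ w : Fin s → Bool, ∑ b : Bool, totalInf (pathRes f q (b :: List.ofFn w)) := by
        rw [Fintype.sum_prod_type]
        exact Finset.sum_comm
      have hsum3 : ∀ w : Fin s → Bool, ∑ b : Bool, totalInf (pathRes f q (b :: List.ofFn w))
          = 2 * (totalInf (pathRes f q (List.ofFn w))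
              - influence (pathRes f q (List.ofFn w)) (q (List.ofFn w))) := by
        intro w
        exact Stmt19Aux.totalInf_fixCoord_sum (pathRes f q (List.ofFn w)) (q (List.ofFn w))
      have hbound : ∀ w : Fin s → Bool,
          2 * (totalInf (pathRes f q (List.ofFn w))
            - influence (pathRes f q (List.ofFn w)) (q (List.ofFn w)))
          ≤ 2 * totalInf (pathRes f q (List.ofFn w)) * (1 - 1 / (2 * (k:ℝ) ^ 3)) := by
        intro w
        apply Stmt19Aux.key2 hk1 (hbr (List.ofFn w))
        apply hq
        rw [List.length_ofFn]
        omega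
      have hfinal : ∑ v : Fin (s+1) → Bool, totalInf (pathRes f q (List.ofFn v))
          ≤ (∑ w : Fin s → Bool, 2 * totalInf (pathRes f q (List.ofFn w)))
            * (1 - 1 / (2 * (k:ℝ) ^ 3)) := by
        rw [hsum1, hsum2, Finset.sum_mul]
        apply Finset.sum_le_sum
        intro w _
        rw [hsum3 w]
        exact hbound w
      rw [hΦ, hΦ]
      have hpow : (2:ℝ) ^ (s+1) = 2 * 2 ^ s := by ring
      have h2s : (0:ℝ) < 2 ^ s := by positivity
      rw [show s + 1 - 1 = s from rfl]
      rw [div_le_iff₀ (by positivity : (0:ℝ) < 2 ^ (s+1))]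
      calc ∑ v : Fin (s+1) → Bool, totalInf (pathRes f q (List.ofFn v))
          ≤ (∑ w : Fin s → Bool, 2 * totalInf (pathRes f q (List.ofFn w)))
            * (1 - 1 / (2 * (k:ℝ) ^ 3)) := hfinal
      _ = (∑ v : Fin s → Bool, totalInf (pathRes f q (List.ofFn v))) / 2 ^ s
            * (1 - 1 / (2 * (k:ℝ) ^ 3)) * 2 ^ (s + 1) := by
          rw [← Finset.mul_sum, hpow]
          field_simp
    refine ⟨by exact_mod_cast step, ?_⟩
    have claim : ∀ m : ℕ, m ≤ d → Φ m ≤ (k:ℝ) * (1 - 1 / (2 * (k:ℝ) ^ 3)) ^ m := by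
      intro m
      induction m with
      | zero =>
        intro _
        rw [hΦ]
        rw [Fintype.sum_unique (fun v : Fin 0 → Bool => totalInf (pathRes f q (List.ofFn v)))]
        simp only [List.ofFn_zero, pow_zero, div_one, mul_one]
        exact Stmt19Aux.totalInf_le_cert hb
      | succ m ih =>
        intro hmd
        have h1 := step (m+1) (by omega) hmd
        rw [show m + 1 - 1 = m from rfl] at h1
        calc Φ (m+1) ≤ Φ m * (1 - 1 / (2 * (k:ℝ) ^ 3)) := h1
        _ ≤ (k:ℝ) * (1 - 1 / (2 * (k:ℝ) ^ 3)) ^ m * (1 - 1 / (2 * (k:ℝ) ^ 3)) :=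
            mul_le_mul_of_nonneg_right (ih (by omega)) heps
        _ = (k:ℝ) * (1 - 1 / (2 * (k:ℝ) ^ 3)) ^ (m+1) := by rw [pow_succ]; ring
    exact_mod_cast claim d le_rfl
  · -- degenerate case k = 0 : f is constant
    have hc : ∀ x y, f x = f y := by
      intro x y
      obtain ⟨S, hS, hcard⟩ := hb x
      have hS0 : S = ∅ := Finset.card_eq_zero.mp (by omega)
      subst hS0
      exact (hS y (fun j hj => absurd hj (Finset.notMem_empty j))).symm
    have hzero : ∀ t : ℕ, Φ t = 0 := by
      intro t
      rw [hΦ]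
      rw [Finset.sum_congr rfl (fun v _ =>
        Stmt19Aux.totalInf_const (Stmt19Aux.pathRes_const hc q (List.ofFn v)))]
      simp
    constructor
    · intro t _ _
      rw [hzero t, hzero (t-1)]
      simp
    · rw [hzero d]
      have hk0 : k = 0 := by omega
      subst hk0
      simp
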